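/- For every integer k ≥ 2, the number of down-sets of ◊×C_k equals the number of down-sets of ◊×C_{k−1} plus the number of down-sets of Λ×C_k. -/

import Mathlib

/-- The poset `Λ`: two incomparable minimal elements below a top element, realized as
the subposet of the diamond `◊ = C₂ × C₂` on the three elements different from the
bottom `(0,0)`. -/
abbrev Lam := {q : Fin 2 × Fin 2 // q ≠ (0, 0)}

/-- The diamond poset `◊ = C₂ × C₂`. -/
abbrev Diamond := Fin 2 × Fin 2

private lemma bot_le' (d : Diamond) : ((0,0) : Diamond) ≤ d := by
  constructor <;> simp [Fin.le_def]

private lemma le_bot' {d : Diamond} (h : d ≤ (0,0)) : d = (0,0) := by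
  revert h; revert d; decide

open Classical in
private noncomputable def keyEquiv (n : ℕ) :
    LowerSet (Diamond × Fin (n+1)) ≃
      (LowerSet (Diamond × Fin n) ⊕ LowerSet (Lam × Fin (n+1))) where
  toFun S :=
    if h : ((0,0), Fin.last n) ∈ S then
      Sum.inr ⟨{p | (p.1.val, p.2) ∈ S}, by
        rintro ⟨q', i'⟩ ⟨q, i⟩ ⟨hq, hi⟩ hm
        have hle : ((q.val, i) : Diamond × Fin (n+1)) ≤ (q'.val, i') := ⟨hq, hi⟩
        exact S.lower hle hm⟩
    else
      Sum.inl ⟨{p | (p.1, p.2.castSucc) ∈ S}, by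
        rintro ⟨d', j'⟩ ⟨d, j⟩ ⟨hd, hj⟩ hm
        have hle : ((d, j.castSucc) : Diamond × Fin (n+1)) ≤ (d', j'.castSucc) :=
          ⟨hd, Fin.castSucc_le_castSucc_iff.mpr hj⟩
        exact S.lower hle hm⟩
  invFun T :=
    match T with
    | Sum.inl T => ⟨{p | ∃ h : (p.2 : ℕ) < n, (p.1, (⟨p.2, h⟩ : Fin n)) ∈ T}, by
        rintro ⟨d', i'⟩ ⟨d, i⟩ ⟨hd, hi⟩ ⟨h', hm⟩
        have hlt : (i : ℕ) < n := lt_of_le_of_lt hi h'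
        have hle : ((d, ⟨(i : ℕ), hlt⟩) : Diamond × Fin n) ≤ (d', ⟨(i' : ℕ), h'⟩) := ⟨hd, hi⟩
        exact ⟨hlt, T.lower hle hm⟩⟩
    | Sum.inr T => ⟨{p | p.1 = (0,0) ∨ ∃ h : p.1 ≠ (0,0), ((⟨p.1, h⟩ : Lam), p.2) ∈ T}, by
        rintro ⟨d', i'⟩ ⟨d, i⟩ ⟨hd, hi⟩ hm
        by_cases hb : d = (0,0)
        · exact Or.inl hb
        · refine Or.inr ⟨hb, ?_⟩
          rcases hm with hb' | ⟨hb', hm⟩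
          · exact absurd (le_bot' (hb' ▸ hd)) hb
          · have hle : (((⟨d, hb⟩ : Lam), i) : Lam × Fin (n+1)) ≤ ((⟨d', hb'⟩ : Lam), i') :=
              ⟨hd, hi⟩
            exact T.lower hle hm⟩
  left_inv S := by
    by_cases h : ((0,0), Fin.last n) ∈ S
    · simp only [dif_pos h]
      ext ⟨d, i⟩
      simp only [LowerSet.coe_mk, SetLike.mem_coe, LowerSet.mem_mk, Set.mem_setOf_eq]
      constructor
      · rintro (rfl | ⟨hb, hm⟩)
        · have hle : (((0,0) : Diamond), i) ≤ (((0,0) : Diamond), Fin.last n) :=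
            ⟨le_refl _, Fin.le_last i⟩
          exact S.lower hle h
        · exact hm
      · intro hm
        by_cases hb : d = (0,0)
        · exact Or.inl hb
        · exact Or.inr ⟨hb, hm⟩
    · simp only [dif_neg h]
      ext ⟨d, i⟩
      simp only [LowerSet.coe_mk, SetLike.mem_coe, LowerSet.mem_mk, Set.mem_setOf_eq]
      constructor
      · rintro ⟨hlt, hm⟩
        have : (⟨(i : ℕ), hlt⟩ : Fin n).castSucc = i := by ext; rfl
        change (d, (⟨(i : ℕ), hlt⟩ : Fin n).castSucc) ∈ S at hm
        rwa [this] at hm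
      · intro hm
        have hlt : (i : ℕ) < n := by
          rcases lt_or_eq_of_le (Nat.lt_succ_iff.mp i.isLt) with h' | h'
          · exact h'
          · exfalso
            have : i = Fin.last n := by ext; exact h'
            have hle : ((((0,0) : Diamond), Fin.last n) : Diamond × Fin (n+1)) ≤ (d, i) := by
              rw [this]; exact ⟨bot_le' d, le_refl _⟩
            exact h (S.lower hle hm)
        refine ⟨hlt, ?_⟩
        have : (⟨(i : ℕ), hlt⟩ : Fin n).castSucc = i := by ext; rfl
        change (d, (⟨(i : ℕ), hlt⟩ : Fin n).castSucc) ∈ S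
        rwa [this]
  right_inv T := by
    match T with
    | Sum.inl T =>
      have hnot : ¬ (((0,0), Fin.last n) ∈
          ({p | ∃ h : (p.2 : ℕ) < n, (p.1, (⟨p.2, h⟩ : Fin n)) ∈ T} : Set (Diamond × Fin (n+1)))) := by
        rintro ⟨hlt, -⟩
        simp [Fin.last] at hlt
      simp only [Equiv.coe_fn_mk, LowerSet.mem_mk, hnot, dif_neg, not_false_iff]
      split_ifs with hh
      · exact absurd hh hnot
      congr 1
      ext ⟨d, j⟩
      simp only [LowerSet.coe_mk, SetLike.mem_coe, LowerSet.mem_mk, Set.mem_setOf_eq]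
      constructor
      · rintro ⟨hlt, hm⟩
        have : (⟨((j.castSucc : Fin (n+1)) : ℕ), hlt⟩ : Fin n) = j := by ext; rfl
        rwa [this] at hm
      · intro hm
        refine ⟨by simpa using j.isLt, ?_⟩
        have : (⟨((j.castSucc : Fin (n+1)) : ℕ), by simpa using j.isLt⟩ : Fin n) = j := by
          ext; rfl
        rwa [this]
    | Sum.inr T =>
      have hmem : (((0,0), Fin.last n) ∈
          ({p | p.1 = (0,0) ∨ ∃ h : p.1 ≠ (0,0), ((⟨p.1, h⟩ : Lam), p.2) ∈ T} :
            Set (Diamond × Fin (n+1)))) := Or.inl rfl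
      simp only [Equiv.coe_fn_mk, LowerSet.mem_mk, hmem, dif_pos]
      split_ifs with hh
      swap
      · exact absurd hmem hh
      congr 1
      ext ⟨⟨q, hq⟩, i⟩
      simp only [LowerSet.coe_mk, SetLike.mem_coe, LowerSet.mem_mk, Set.mem_setOf_eq]
      constructor
      · rintro (h | ⟨h, hm⟩)
        · exact absurd h hq
        · exact hm
      · intro hm
        exact Or.inr ⟨hq, hm⟩

private lemma key (n : ℕ) :
    Nat.card (LowerSet (Diamond × Fin (n+1)))
      = Nat.card (LowerSet (Diamond × Fin n)) + Nat.card (LowerSet (Lam × Fin (n+1))) := by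
  rw [← Nat.card_sum]
  exact Nat.card_congr (keyEquiv n)

/-- For every integer `k ≥ 2`, the number of down-sets of `◊ × C_k` equals the number
of down-sets of `◊ × C_{k−1}` plus the number of down-sets of `Λ × C_k`. -/
theorem stmt15 :
    ∀ k : ℕ, 2 ≤ k →
      Nat.card (LowerSet (Diamond × Fin k))
        = Nat.card (LowerSet (Diamond × Fin (k - 1)))
          + Nat.card (LowerSet (Lam × Fin k)) := by
  intro k hk
  obtain ⟨n, rfl⟩ : ∃ n, k = n + 1 := ⟨k - 1, by omega⟩
  simpa using key n
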